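/- Let k ≥ 2 and let G, Φ, p₁, …, p_k, c₀, …, c_{k−2}, C₀, …, C_{k−2} be analytic functions on a plane domain U, such that p₁, …, p_k are linearly independent solutions on U of y^{(k)} + c_{k−2}y^{(k−2)} + ⋯ + c₀y = 0. Adopt the conventions C_k = 1, c_{k−1} = C_{k−1} = c_{−1} = C_{−1} = 0, and for 0 ≤ μ ≤ k define the operator M_{k,μ}[w] = Σ_{m=μ}^{k} (m!/(μ!(m−μ)!))·C_m·w^{(m−μ)}, together with M_{k,−1}[w] = 0. Then the k functions p₁′G + p₁Φ, …, p_k′G + p_kΦ are all solutions on U of y^{(k)} + C_{k−2}y^{(k−2)} + ⋯ + C₀y = 0 if and only if G and Φ satisfy, for every 0 ≤ μ ≤ k−1, the identity M_{k,μ}[Φ] − c_μΦ = −M_{k,μ−1}[G] + c_μ·M_{k,k−1}[G] + (c_μ′ + c_{μ−1})·G on U. -/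

import Mathlib

/-- The operator `M_{k,μ}[w] = Σ_{m=μ}^k (m choose μ) C_m w^{(m−μ)}` of the
Frank–Hellerstein lemma. -/
noncomputable def FrankMop (k : ℕ) (C : ℕ → ℂ → ℂ) (μ : ℕ) (w : ℂ → ℂ) (z : ℂ) : ℂ :=
  ∑ m ∈ Finset.Icc μ k, (m.choose μ : ℂ) * C m z * iteratedDeriv (m - μ) w z

open Finset

namespace FrankAux

variable {U : Set ℂ}

lemma an_iter {f : ℂ → ℂ} (hf : AnalyticOnNhd ℂ f U) (n : ℕ) :
    AnalyticOnNhd ℂ (iteratedDeriv n f) U := by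
  rw [iteratedDeriv_eq_iterate]; exact hf.iterated_deriv n

lemma iter_add (hU : IsOpen U) {f g : ℂ → ℂ} (hf : AnalyticOnNhd ℂ f U)
    (hg : AnalyticOnNhd ℂ g U) (n : ℕ) :
    ∀ x ∈ U, iteratedDeriv n (fun z => f z + g z) x
      = iteratedDeriv n f x + iteratedDeriv n g x := by
  induction n with
  | zero => simp
  | succ n IH =>
    intro x hx
    rw [iteratedDeriv_succ, iteratedDeriv_succ, iteratedDeriv_succ]
    have h1 : deriv (iteratedDeriv n fun z => f z + g z) x
        = deriv (fun z => iteratedDeriv n f z + iteratedDeriv n g z) x := by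
      apply Filter.EventuallyEq.deriv_eq
      filter_upwards [hU.mem_nhds hx] with y hy using IH y hy
    rw [h1, deriv_fun_add ((an_iter hf n x hx).differentiableAt)
      ((an_iter hg n x hx).differentiableAt)]

lemma pascal_sum (F G : ℕ → ℂ) (n : ℕ) :
    ∑ i ∈ range (n+1), (n.choose i : ℂ) * (F (i+1) * G (n-i) + F i * G (n+1-i))
      = ∑ i ∈ range (n+2), ((n+1).choose i : ℂ) * F i * G (n+1-i) := by
  have key : ∑ i ∈ range (n+1), (n.choose i : ℂ) * F i * G (n+1-i)
      = (∑ i ∈ range (n+1), (n.choose (i+1) : ℂ) * F (i+1) * G (n-i)) + F 0 * G (n+1) := by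
    rw [Finset.sum_range_succ' (fun i => (n.choose i : ℂ) * F i * G (n+1-i)) n]
    congr 1
    · rw [Finset.sum_range_succ]
      rw [Nat.choose_succ_self]
      push_cast
      rw [zero_mul, zero_mul, add_zero]
    · simp
  rw [Finset.sum_range_succ' (fun i => ((n+1).choose i : ℂ) * F i * G (n+1-i)) (n+1)]
  have h2 : ∀ i ∈ range (n+1),
      ((n+1).choose (i+1) : ℂ) * F (i+1) * G (n+1-(i+1))
        = (n.choose i : ℂ) * F (i+1) * G (n-i) + (n.choose (i+1) : ℂ) * F (i+1) * G (n-i) := by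
    intro i hi
    have h3 : n + 1 - (i + 1) = n - i := by omega
    rw [h3, Nat.choose_succ_succ]
    push_cast
    ring
  rw [Finset.sum_congr rfl h2, Finset.sum_add_distrib]
  simp only [mul_add, Finset.sum_add_distrib, ← mul_assoc]
  rw [key]
  simp only [Nat.choose_zero_right, Nat.cast_one, one_mul, Nat.sub_zero]
  ring

end FrankAux

namespace FrankAux2
open FrankAux
variable {U : Set ℂ}

lemma iter_zero (n : ℕ) (x : ℂ) : iteratedDeriv n (fun _ : ℂ => (0:ℂ)) x = 0 := by
  induction n generalizing x with
  | zero => simp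
  | succ n IH =>
    rw [iteratedDeriv_succ', show deriv (fun _ : ℂ => (0:ℂ)) = fun _ : ℂ => (0:ℂ) from
      funext fun y => deriv_const y 0]
    exact IH x

lemma iter_mul (hU : IsOpen U) {f g : ℂ → ℂ} (hf : AnalyticOnNhd ℂ f U)
    (hg : AnalyticOnNhd ℂ g U) (n : ℕ) :
    ∀ x ∈ U, iteratedDeriv n (fun z => f z * g z) x
      = ∑ i ∈ range (n+1), (n.choose i : ℂ) * iteratedDeriv i f x * iteratedDeriv (n-i) g x := by
  induction n with
  | zero => intro x hx; simp
  | succ n IH =>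
    intro x hx
    rw [iteratedDeriv_succ]
    have h1 : deriv (iteratedDeriv n fun z => f z * g z) x
        = deriv (fun z => ∑ i ∈ range (n+1),
            (n.choose i : ℂ) * iteratedDeriv i f z * iteratedDeriv (n-i) g z) x := by
      apply Filter.EventuallyEq.deriv_eq
      filter_upwards [hU.mem_nhds hx] with y hy using IH y hy
    have hdiff : ∀ i ∈ range (n+1), DifferentiableAt ℂ
        (fun z => (n.choose i : ℂ) * iteratedDeriv i f z * iteratedDeriv (n-i) g z) x :=
      fun i _ => (((an_iter hf i x hx).differentiableAt).const_mul _).mul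
        ((an_iter hg (n-i) x hx).differentiableAt)
    rw [h1, deriv_fun_sum hdiff]
    have h2 : ∀ i ∈ range (n+1),
        deriv (fun z => (n.choose i : ℂ) * iteratedDeriv i f z * iteratedDeriv (n-i) g z) x
          = (n.choose i : ℂ) * (iteratedDeriv (i+1) f x * iteratedDeriv (n-i) g x
              + iteratedDeriv i f x * iteratedDeriv (n+1-i) g x) := by
      intro i hi
      have hF : DifferentiableAt ℂ (fun z => (n.choose i : ℂ) * iteratedDeriv i f z) x :=
        ((an_iter hf i x hx).differentiableAt).const_mul _
      have hG : DifferentiableAt ℂ (iteratedDeriv (n-i) g) x :=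
        (an_iter hg (n-i) x hx).differentiableAt
      rw [deriv_fun_mul hF hG, deriv_const_mul _ ((an_iter hf i x hx).differentiableAt)]
      rw [← iteratedDeriv_succ, ← iteratedDeriv_succ]
      have h3 : n - i + 1 = n + 1 - i := by
        have := Finset.mem_range.mp hi; omega
      rw [h3]; ring
    rw [Finset.sum_congr rfl h2]
    exact pascal_sum (fun i => iteratedDeriv i f x) (fun i => iteratedDeriv i g x) n

lemma iter_smul (hU : IsOpen U) {f : ℂ → ℂ} (hf : AnalyticOnNhd ℂ f U) (a : ℂ) (n : ℕ) :
    ∀ x ∈ U, iteratedDeriv n (fun z => a * f z) x = a * iteratedDeriv n f x := by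
  induction n with
  | zero => simp
  | succ n IH =>
    intro x hx
    rw [iteratedDeriv_succ, iteratedDeriv_succ]
    have h1 : deriv (iteratedDeriv n fun z => a * f z) x
        = deriv (fun z => a * iteratedDeriv n f z) x := by
      apply Filter.EventuallyEq.deriv_eq
      filter_upwards [hU.mem_nhds hx] with y hy using IH y hy
    rw [h1, deriv_const_mul _ ((an_iter hf n x hx).differentiableAt)]

lemma iter_sum (hU : IsOpen U) {ι : Type*} {s : Finset ι} {f : ι → ℂ → ℂ}
    (hf : ∀ i ∈ s, AnalyticOnNhd ℂ (f i) U) (n : ℕ) :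
    ∀ x ∈ U, iteratedDeriv n (fun z => ∑ i ∈ s, f i z) x
      = ∑ i ∈ s, iteratedDeriv n (f i) x := by
  classical
  induction s using Finset.induction with
  | empty =>
    intro x hx
    simp only [Finset.sum_empty]
    exact iter_zero n x
  | @insert a s hnot IH =>
    intro x hx
    have hfa : AnalyticOnNhd ℂ (f a) U := hf a (Finset.mem_insert_self a s)
    have hfs : ∀ i ∈ s, AnalyticOnNhd ℂ (f i) U := fun i hi => hf i (Finset.mem_insert_of_mem hi)
    have hsum : AnalyticOnNhd ℂ (fun z => ∑ i ∈ s, f i z) U :=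
      Finset.analyticOnNhd_fun_sum s fun i hi => hfs i hi
    have he : (fun z => ∑ i ∈ insert a s, f i z) = fun z => f a z + ∑ i ∈ s, f i z := by
      funext z; exact Finset.sum_insert hnot
    rw [he, iter_add hU hfa hsum n x hx, IH hfs x hx, Finset.sum_insert hnot]

end FrankAux2

namespace FrankAux3
open FrankAux FrankAux2
variable {U : Set ℂ}

lemma iter_split (a b : ℕ) (f : ℂ → ℂ) (x : ℂ) :
    iteratedDeriv (a + b) f x = iteratedDeriv a (iteratedDeriv b f) x := by
  simp only [iteratedDeriv_eq_iterate]
  rw [Function.iterate_add_apply]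

lemma eventually_zero {q : ℂ → ℂ} {z₀ : ℂ} (hq : AnalyticAt ℂ q z₀)
    (h : ∀ n, iteratedDeriv n q z₀ = 0) : q =ᶠ[nhds z₀] 0 := by
  obtain ⟨P, hPat⟩ := hq
  obtain ⟨r, hP⟩ := hPat
  have hball : ∀ y ∈ Metric.eball (0:ℂ) r, q (z₀ + y) = 0 := by
    intro y hy
    have hs := hP.hasSum_iteratedFDeriv hy
    have hz : ∀ n, (n.factorial : ℂ)⁻¹ • iteratedFDeriv ℂ n q z₀ (fun _ => y) = 0 := by
      intro n
      rw [iteratedFDeriv_apply_eq_iteratedDeriv_mul_prod, h n]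
      simp
    simp_rw [hz] at hs
    exact (hs.unique hasSum_zero).symm ▸ rfl
  have hmem : Metric.eball z₀ r ∈ nhds z₀ := Metric.eball_mem_nhds z₀ hP.r_pos
  filter_upwards [hmem] with z hz
  have hy : z - z₀ ∈ Metric.eball (0:ℂ) r := by
    rw [Metric.mem_eball] at hz ⊢
    rwa [show edist (z - z₀) 0 = edist z z₀ by
      rw [edist_eq_enorm_sub, edist_eq_enorm_sub, sub_zero]]
  have := hball (z - z₀) hy
  simpa using this

lemma tri_swap (g : ℕ → ℕ → ℂ) (k : ℕ) :
    ∑ m ∈ range (k+1), ∑ i ∈ range (m+1), g m i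
      = ∑ i ∈ range (k+1), ∑ m ∈ Finset.Icc i k, g m i := by
  have := Finset.sum_Ico_Ico_comm 0 (k+1) (fun i m => g m i)
  simp only [← Finset.range_eq_Ico] at this
  rw [← this]
  refine Finset.sum_congr rfl fun i hi => ?_
  rw [Finset.Ico_add_one_right_eq_Icc]

lemma shift_sum (h : ℕ → ℂ) (n : ℕ) :
    ∑ μ ∈ range (n+1), (if μ = 0 then 0 else h (μ-1))
      = ∑ μ ∈ range n, h μ := by
  rw [Finset.sum_range_succ' (fun μ => if μ = 0 then (0:ℂ) else h (μ-1)) n]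
  simp

lemma an_FrankMop {C : ℕ → ℂ → ℂ} {w : ℂ → ℂ} {k μ : ℕ}
    (hC : ∀ m, m ≤ k → AnalyticOnNhd ℂ (C m) U) (hw : AnalyticOnNhd ℂ w U) :
    AnalyticOnNhd ℂ (FrankMop k C μ w) U := by
  unfold FrankMop
  apply Finset.analyticOnNhd_fun_sum
  intro m hm
  have hmk : m ≤ k := (Finset.mem_Icc.mp hm).2
  exact ((analyticOnNhd_const.mul (hC m hmk)).mul (an_iter hw (m - μ)))

lemma FrankMop_self {C : ℕ → ℂ → ℂ} {w : ℂ → ℂ} {k : ℕ} (hCk : ∀ z : ℂ, C k z = 1) (z : ℂ) :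
    FrankMop k C k w z = w z := by
  unfold FrankMop
  rw [Finset.Icc_self, Finset.sum_singleton, hCk]
  simp

end FrankAux3

open FrankAux FrankAux2 FrankAux3

noncomputable def Bfun (k : ℕ) (c C : ℕ → ℂ → ℂ) (G Φ : ℂ → ℂ) (μ : ℕ) (z : ℂ) : ℂ :=
  FrankMop k C μ Φ z + (if μ = 0 then 0 else FrankMop k C (μ-1) G z)
    - c μ z * (Φ z + FrankMop k C (k-1) G z)
    - (deriv (c μ) z + (if μ = 0 then 0 else c (μ-1) z)) * G z

lemma split_two (f : ℕ → ℂ) {n m : ℕ} (h : m = n + 2) :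
    ∑ i ∈ range m, f i = ∑ i ∈ range n, f i + f n + f (n+1) := by
  subst h; rw [Finset.sum_range_succ, Finset.sum_range_succ]

lemma shift_sum2 (g Pv : ℕ → ℂ) {n m : ℕ} (h : m = n + 1) :
    ∑ μ ∈ range m, (if μ = 0 then 0 else g (μ-1)) * Pv μ = ∑ μ ∈ range n, g μ * Pv (μ+1) := by
  subst h
  rw [Finset.sum_range_succ' (fun μ => (if μ = 0 then (0:ℂ) else g (μ-1)) * Pv μ) n]
  simp

lemma frank_key {U : Set ℂ} (hUo : IsOpen U) {k : ℕ} (hk : 2 ≤ k)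
    {G Φ f : ℂ → ℂ} {c C : ℕ → ℂ → ℂ}
    (hG : AnalyticOnNhd ℂ G U) (hΦ : AnalyticOnNhd ℂ Φ U) (hf : AnalyticOnNhd ℂ f U)
    (hc : ∀ μ, μ ≤ k → AnalyticOnNhd ℂ (c μ) U)
    (hck : ∀ z : ℂ, c k z = 1) (hCk : ∀ z : ℂ, C k z = 1)
    (hck1 : ∀ z : ℂ, c (k - 1) z = 0)
    (hsol : ∀ z ∈ U, ∑ m ∈ Finset.range (k + 1), c m z * iteratedDeriv m f z = 0) :
    ∀ z ∈ U, ∑ m ∈ Finset.range (k + 1),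
        C m z * iteratedDeriv m (fun w => deriv f w * G w + f w * Φ w) z
      = ∑ μ ∈ Finset.range k, Bfun k c C G Φ μ z * iteratedDeriv μ f z := by
  intro z hz
  have hkk : k - 1 + 1 = k := by omega
  have e1 : ∀ m, iteratedDeriv m (fun w => deriv f w * G w + f w * Φ w) z
      = ∑ i ∈ range (m+1),
          (m.choose i : ℂ) * iteratedDeriv (i+1) f z * iteratedDeriv (m-i) G z
        + ∑ i ∈ range (m+1),
          (m.choose i : ℂ) * iteratedDeriv i f z * iteratedDeriv (m-i) Φ z := by
    intro m
    rw [iter_add hUo (hf.deriv.mul hG) (hf.mul hΦ) m z hz,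
        iter_mul hUo hf.deriv hG m z hz, iter_mul hUo hf hΦ m z hz]
    congr 1
    refine Finset.sum_congr rfl fun i _ => ?_
    rw [← iteratedDeriv_succ']
  have e2 : ∑ m ∈ range (k+1),
        C m z * iteratedDeriv m (fun w => deriv f w * G w + f w * Φ w) z
      = ∑ i ∈ range (k+1), FrankMop k C i G z * iteratedDeriv (i+1) f z
        + ∑ i ∈ range (k+1), FrankMop k C i Φ z * iteratedDeriv i f z := by
    calc ∑ m ∈ range (k+1),
          C m z * iteratedDeriv m (fun w => deriv f w * G w + f w * Φ w) z
        = ∑ m ∈ range (k+1), (∑ i ∈ range (m+1),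
              C m z * ((m.choose i : ℂ) * iteratedDeriv (i+1) f z * iteratedDeriv (m-i) G z)
            + ∑ i ∈ range (m+1),
              C m z * ((m.choose i : ℂ) * iteratedDeriv i f z * iteratedDeriv (m-i) Φ z)) := by
          refine Finset.sum_congr rfl fun m _ => ?_
          rw [e1 m, mul_add, Finset.mul_sum, Finset.mul_sum]
      _ = ∑ m ∈ range (k+1), ∑ i ∈ range (m+1),
              C m z * ((m.choose i : ℂ) * iteratedDeriv (i+1) f z * iteratedDeriv (m-i) G z)
            + ∑ m ∈ range (k+1), ∑ i ∈ range (m+1),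
              C m z * ((m.choose i : ℂ) * iteratedDeriv i f z * iteratedDeriv (m-i) Φ z) :=
          Finset.sum_add_distrib
      _ = ∑ i ∈ range (k+1), ∑ m ∈ Finset.Icc i k,
              C m z * ((m.choose i : ℂ) * iteratedDeriv (i+1) f z * iteratedDeriv (m-i) G z)
            + ∑ i ∈ range (k+1), ∑ m ∈ Finset.Icc i k,
              C m z * ((m.choose i : ℂ) * iteratedDeriv i f z * iteratedDeriv (m-i) Φ z) := by
          rw [tri_swap, tri_swap]
      _ = _ := by
          congr 1
          · refine Finset.sum_congr rfl fun i _ => ?_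
            rw [show FrankMop k C i G z
              = ∑ m ∈ Finset.Icc i k, (m.choose i : ℂ) * C m z * iteratedDeriv (m-i) G z
              from rfl, Finset.sum_mul]
            exact Finset.sum_congr rfl fun m _ => by ring
          · refine Finset.sum_congr rfl fun i _ => ?_
            rw [show FrankMop k C i Φ z
              = ∑ m ∈ Finset.Icc i k, (m.choose i : ℂ) * C m z * iteratedDeriv (m-i) Φ z
              from rfl, Finset.sum_mul]
            exact Finset.sum_congr rfl fun m _ => by ring
  have E1 : iteratedDeriv k f z = -∑ μ ∈ range k, c μ z * iteratedDeriv μ f z := by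
    have h := hsol z hz
    rw [Finset.sum_range_succ, hck z, one_mul] at h
    linear_combination h
  have hdiffsum : deriv (fun y => ∑ m ∈ range (k+1), c m y * iteratedDeriv m f y) z
      = ∑ m ∈ range (k+1),
          (deriv (c m) z * iteratedDeriv m f z + c m z * iteratedDeriv (m+1) f z) := by
    refine (deriv_fun_sum fun m hm =>
      ((hc m (Nat.lt_succ_iff.mp (Finset.mem_range.mp hm)) z hz).differentiableAt.mul
        ((an_iter hf m z hz).differentiableAt))).trans ?_
    refine Finset.sum_congr rfl fun m hm => ?_
    rw [deriv_mul ((hc m (Nat.lt_succ_iff.mp (Finset.mem_range.mp hm)) z hz).differentiableAt)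
      ((an_iter hf m z hz).differentiableAt), ← iteratedDeriv_succ]
  have hD0 : deriv (fun y => ∑ m ∈ range (k+1), c m y * iteratedDeriv m f y) z = 0 := by
    have hev : (fun y => ∑ m ∈ range (k+1), c m y * iteratedDeriv m f y)
        =ᶠ[nhds z] (fun _ => 0) := by
      filter_upwards [hUo.mem_nhds hz] with y hy using hsol y hy
    rw [hev.deriv_eq]
    exact deriv_const z 0
  have E2' : ∑ m ∈ range (k+1),
      (deriv (c m) z * iteratedDeriv m f z + c m z * iteratedDeriv (m+1) f z) = 0 := by
    rw [← hdiffsum]; exact hD0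
  rw [Finset.sum_add_distrib] at E2'
  have hAd : ∑ m ∈ range (k+1), deriv (c m) z * iteratedDeriv m f z
      = ∑ m ∈ range k, deriv (c m) z * iteratedDeriv m f z := by
    rw [Finset.sum_range_succ, show c k = fun _ : ℂ => (1:ℂ) from funext hck]
    simp
  have hBd : ∑ m ∈ range (k+1), c m z * iteratedDeriv (m+1) f z
      = ∑ m ∈ range (k-1), c m z * iteratedDeriv (m+1) f z + iteratedDeriv (k+1) f z := by
    rw [split_two (fun m => c m z * iteratedDeriv (m+1) f z) (show k+1 = (k-1)+2 by omega), hkk]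
    rw [hck1 z, hck z]
    ring
  have E2 : iteratedDeriv (k+1) f z
      = -∑ μ ∈ range k, (deriv (c μ) z + (if μ = 0 then 0 else c (μ-1) z))
          * iteratedDeriv μ f z := by
    have hsh : ∑ μ ∈ range k, (if μ = 0 then 0 else c (μ-1) z) * iteratedDeriv μ f z
        = ∑ μ ∈ range (k-1), c μ z * iteratedDeriv (μ+1) f z :=
      shift_sum2 (fun ν => c ν z) (fun n => iteratedDeriv n f z) (show k = (k-1)+1 by omega)
    have expand : ∑ μ ∈ range k,
        (deriv (c μ) z + (if μ = 0 then 0 else c (μ-1) z)) * iteratedDeriv μ f z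
        = ∑ μ ∈ range k, deriv (c μ) z * iteratedDeriv μ f z
          + ∑ μ ∈ range k, (if μ = 0 then 0 else c (μ-1) z) * iteratedDeriv μ f z := by
      rw [← Finset.sum_add_distrib]
      exact Finset.sum_congr rfl fun μ _ => by ring
    rw [expand, hsh]
    rw [hAd, hBd] at E2'
    linear_combination E2'
  have hS1 : ∑ i ∈ range (k+1), FrankMop k C i G z * iteratedDeriv (i+1) f z
      = ∑ i ∈ range (k-1), FrankMop k C i G z * iteratedDeriv (i+1) f z
        + FrankMop k C (k-1) G z * iteratedDeriv k f z + G z * iteratedDeriv (k+1) f z := by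
    rw [split_two (fun i => FrankMop k C i G z * iteratedDeriv (i+1) f z)
      (show k+1 = (k-1)+2 by omega), hkk, FrankMop_self hCk z]
  have hS2 : ∑ i ∈ range (k+1), FrankMop k C i Φ z * iteratedDeriv i f z
      = ∑ i ∈ range k, FrankMop k C i Φ z * iteratedDeriv i f z
        + Φ z * iteratedDeriv k f z := by
    rw [Finset.sum_range_succ, FrankMop_self hCk z]
  have hR : ∑ μ ∈ range k, Bfun k c C G Φ μ z * iteratedDeriv μ f z
      = ∑ μ ∈ range k, FrankMop k C μ Φ z * iteratedDeriv μ f z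
        + ∑ μ ∈ range (k-1), FrankMop k C μ G z * iteratedDeriv (μ+1) f z
        - (Φ z + FrankMop k C (k-1) G z) * (∑ μ ∈ range k, c μ z * iteratedDeriv μ f z)
        - G z * (∑ μ ∈ range k,
            (deriv (c μ) z + (if μ = 0 then 0 else c (μ-1) z)) * iteratedDeriv μ f z) := by
    rw [← shift_sum2 (fun ν => FrankMop k C ν G z) (fun n => iteratedDeriv n f z)
      (show k = (k-1)+1 by omega)]
    rw [Finset.mul_sum, Finset.mul_sum, ← Finset.sum_add_distrib, ← Finset.sum_sub_distrib,
      ← Finset.sum_sub_distrib]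
    refine Finset.sum_congr rfl fun μ _ => ?_
    simp only [Bfun]
    ring
  rw [e2, hS1, hS2, hR, E1, E2]
  ring

lemma an_Bfun {U : Set ℂ} {k μ : ℕ} {c C : ℕ → ℂ → ℂ} {G Φ : ℂ → ℂ} (hμ : μ ≤ k)
    (hG : AnalyticOnNhd ℂ G U) (hΦ : AnalyticOnNhd ℂ Φ U)
    (hc : ∀ m, m ≤ k → AnalyticOnNhd ℂ (c m) U)
    (hC : ∀ m, m ≤ k → AnalyticOnNhd ℂ (C m) U) :
    AnalyticOnNhd ℂ (Bfun k c C G Φ μ) U := by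
  have h1 : AnalyticOnNhd ℂ (FrankMop k C μ Φ) U := an_FrankMop hC hΦ
  have h2 : AnalyticOnNhd ℂ (fun z => if μ = 0 then (0:ℂ) else FrankMop k C (μ-1) G z) U := by
    by_cases h : μ = 0
    · simp only [h, if_true]; exact analyticOnNhd_const
    · simp only [h, if_false]; exact an_FrankMop hC hG
  have h3 : AnalyticOnNhd ℂ (fun z => c μ z * (Φ z + FrankMop k C (k-1) G z)) U :=
    (hc μ hμ).mul (hΦ.add (an_FrankMop hC hG))
  have h4 : AnalyticOnNhd ℂ
      (fun z => (deriv (c μ) z + (if μ = 0 then 0 else c (μ-1) z)) * G z) U := by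
    apply AnalyticOnNhd.mul _ hG
    apply AnalyticOnNhd.add (hc μ hμ).deriv
    by_cases h : μ = 0
    · simp only [h, if_true]; exact analyticOnNhd_const
    · simp only [h, if_false]; exact hc (μ-1) (by omega)
  exact ((h1.add h2).sub h3).sub h4

/-- Lemma 5.1, the Frank–Hellerstein lemma: with the conventions
`C_k = 1`, `c_{k−1} = C_{k−1} = c_{−1} = C_{−1} = 0` and `M_{k,−1}[w] = 0`, the
functions `p_j'G + p_jΦ` all solve `y^{(k)} + C_{k−2}y^{(k−2)} + ⋯ + C₀y = 0`
if and only if for every `0 ≤ μ ≤ k−1`,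
`M_{k,μ}[Φ] − c_μΦ = −M_{k,μ−1}[G] + c_μ M_{k,k−1}[G] + (c_μ' + c_{μ−1})G` on `U`. -/
theorem frank_hellerstein_lemma
    (k : ℕ) (hk : 2 ≤ k) (U : Set ℂ) (hUo : IsOpen U) (hUc : IsConnected U)
    (G Φ : ℂ → ℂ) (p : Fin k → ℂ → ℂ) (c C : ℕ → ℂ → ℂ)
    (hG : AnalyticOnNhd ℂ G U) (hΦ : AnalyticOnNhd ℂ Φ U)
    (hp : ∀ j, AnalyticOnNhd ℂ (p j) U)
    (hc : ∀ μ, μ ≤ k → AnalyticOnNhd ℂ (c μ) U)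
    (hC : ∀ μ, μ ≤ k → AnalyticOnNhd ℂ (C μ) U)
    (hck : ∀ z : ℂ, c k z = 1) (hCk : ∀ z : ℂ, C k z = 1)
    (hck1 : ∀ z : ℂ, c (k - 1) z = 0) (hCk1 : ∀ z : ℂ, C (k - 1) z = 0)
    (hsol : ∀ j : Fin k, ∀ z ∈ U,
        ∑ m ∈ Finset.range (k + 1), c m z * iteratedDeriv m (p j) z = 0)
    (hindep : ∀ A : Fin k → ℂ, (∀ z ∈ U, ∑ j, A j * p j z = 0) → ∀ j, A j = 0) :
    (∀ j : Fin k, ∀ z ∈ U,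
        ∑ m ∈ Finset.range (k + 1),
          C m z * iteratedDeriv m (fun w => deriv (p j) w * G w + p j w * Φ w) z = 0)
      ↔
    (∀ μ : ℕ, μ ≤ k - 1 → ∀ z ∈ U,
        FrankMop k C μ Φ z - c μ z * Φ z
          = -(if μ = 0 then 0 else FrankMop k C (μ - 1) G z)
            + c μ z * FrankMop k C (k - 1) G z
            + (deriv (c μ) z + (if μ = 0 then 0 else c (μ - 1) z)) * G z) := by
  classical
  have key : ∀ j : Fin k, ∀ z ∈ U,
      ∑ m ∈ Finset.range (k + 1),
          C m z * iteratedDeriv m (fun w => deriv (p j) w * G w + p j w * Φ w) z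
        = ∑ μ ∈ Finset.range k, Bfun k c C G Φ μ z * iteratedDeriv μ (p j) z :=
    fun j => frank_key hUo hk hG hΦ (hp j) hc hck hCk hck1 (hsol j)
  constructor
  · intro hyp
    have hBsum : ∀ (j : Fin k), ∀ z ∈ U,
        ∑ μ ∈ Finset.range k, Bfun k c C G Φ μ z * iteratedDeriv μ (p j) z = 0 :=
      fun j z hz => by rw [← key j z hz]; exact hyp j z hz
    set M : ℂ → Matrix (Fin k) (Fin k) ℂ :=
      fun z μ j => iteratedDeriv (μ : ℕ) (p j) z with hM
    have hB0 : ∀ μ', μ' < k → ∀ z ∈ U, Bfun k c C G Φ μ' z = 0 := by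
      by_cases hW : ∀ z ∈ U, (M z).det = 0
      · exfalso
        obtain ⟨z₀, hz₀⟩ := hUc.nonempty
        obtain ⟨A, hA0, hAv⟩ := (Matrix.exists_mulVec_eq_zero_iff (M := M z₀)).mpr (hW z₀ hz₀)
        set q : ℂ → ℂ := fun z => ∑ j, A j * p j z with hq
        have hpa : ∀ j : Fin k, AnalyticOnNhd ℂ (fun z => A j * p j z) U :=
          fun j => analyticOnNhd_const.mul (hp j)
        have hqa : AnalyticOnNhd ℂ q U := Finset.analyticOnNhd_fun_sum _ fun j _ => hpa j
        have hDq : ∀ n, ∀ x ∈ U,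
            iteratedDeriv n q x = ∑ j, A j * iteratedDeriv n (p j) x := by
          intro n x hx
          rw [hq, iter_sum hUo (fun j _ => hpa j) n x hx]
          exact Finset.sum_congr rfl fun j _ => iter_smul hUo (hp j) (A j) n x hx
        have hqode : ∀ x ∈ U,
            ∑ m ∈ Finset.range (k+1), c m x * iteratedDeriv m q x = 0 := by
          intro x hx
          have h1 : ∀ m ∈ Finset.range (k+1),
              c m x * iteratedDeriv m q x
                = ∑ j, A j * (c m x * iteratedDeriv m (p j) x) := fun m _ => by
            rw [hDq m x hx, Finset.mul_sum]
            exact Finset.sum_congr rfl fun j _ => by ring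
          rw [Finset.sum_congr rfl h1, Finset.sum_comm]
          apply Finset.sum_eq_zero; intro j _
          rw [← Finset.mul_sum, hsol j x hx, mul_zero]
        have hinit : ∀ μ', μ' < k → iteratedDeriv μ' q z₀ = 0 := by
          intro μ' hμ'
          rw [hDq μ' z₀ hz₀]
          have h2 := congrFun hAv ⟨μ', hμ'⟩
          simpa [Matrix.mulVec, dotProduct, hM, mul_comm] using h2
        have hall : ∀ n, iteratedDeriv n q z₀ = 0 := by
          intro n
          induction n using Nat.strong_induction_on with
          | _ n IH =>
            by_cases hn : n < k
            · exact hinit n hn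
            · have hnk : n = (n - k) + k := by omega
              rw [hnk, iter_split (n-k) k q z₀]
              have hEq : Set.EqOn (iteratedDeriv k q)
                  (fun x => -∑ m ∈ Finset.range k, c m x * iteratedDeriv m q x) U := by
                intro x hx
                have h := hqode x hx
                rw [Finset.sum_range_succ, hck x, one_mul] at h
                show iteratedDeriv k q x
                  = -∑ m ∈ Finset.range k, c m x * iteratedDeriv m q x
                linear_combination h
              rw [(hEq.iteratedDeriv_of_isOpen hUo (n-k)) hz₀, iteratedDeriv_fun_neg]
              rw [iter_sum hUo
                (fun m hm => (hc m (le_of_lt (Finset.mem_range.mp hm))).mul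
                  (an_iter hqa m)) (n-k) z₀ hz₀, neg_eq_zero]
              apply Finset.sum_eq_zero; intro m hm
              rw [iter_mul hUo (hc m (le_of_lt (Finset.mem_range.mp hm)))
                (an_iter hqa m) (n-k) z₀ hz₀]
              apply Finset.sum_eq_zero; intro i hi
              rw [← iter_split (n-k-i) m q z₀,
                IH ((n-k-i)+m) (by have hmk := Finset.mem_range.mp hm; omega), mul_zero]
        have hq0 := hqa.eqOn_zero_of_preconnected_of_eventuallyEq_zero hUc.isPreconnected hz₀
          (eventually_zero (hqa z₀ hz₀) hall)
        have hA := hindep A (fun x hx => by have := hq0 hx; simpa [hq] using this)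
        exact hA0 (funext hA)
      · push_neg at hW
        obtain ⟨z₀, hz₀U, hz₀d⟩ := hW
        have hMdet : AnalyticOnNhd ℂ (fun z => (M z).det) U := by
          have hdet : (fun z => (M z).det)
              = fun z => ∑ σ : Equiv.Perm (Fin k),
                  ((Equiv.Perm.sign σ : ℤ) : ℂ) * ∏ i, M z (σ i) i := by
            funext z; rw [Matrix.det_apply']
          rw [hdet]
          apply Finset.analyticOnNhd_fun_sum
          intro σ _
          apply AnalyticOnNhd.mul analyticOnNhd_const
          apply Finset.analyticOnNhd_fun_prod
          intro i _
          exact an_iter (hp i) _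
        have hvec : ∀ x ∈ U, (M x).det ≠ 0 → ∀ ν : Fin k, Bfun k c C G Φ (ν : ℕ) x = 0 := by
          intro x hx hdx ν
          have hvM : Matrix.vecMul (fun ν : Fin k => Bfun k c C G Φ (ν : ℕ) x) (M x) = 0 := by
            funext j
            have h3 := hBsum j x hx
            rw [← Fin.sum_univ_eq_sum_range
              (fun ν => Bfun k c C G Φ ν x * iteratedDeriv ν (p j) x) k] at h3
            simpa [Matrix.vecMul, dotProduct, hM] using h3
          have hu : IsUnit (M x).det := isUnit_iff_ne_zero.mpr hdx
          have hv0 : (fun ν : Fin k => Bfun k c C G Φ (ν : ℕ) x) = 0 := by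
            have h1 : Matrix.vecMul (fun ν : Fin k => Bfun k c C G Φ (ν : ℕ) x)
                ((M x) * (M x)⁻¹) = 0 := by
              rw [← Matrix.vecMul_vecMul, hvM, Matrix.zero_vecMul]
            rwa [Matrix.mul_nonsing_inv _ hu, Matrix.vecMul_one] at h1
          exact congrFun hv0 ν
        intro μ' hμ' z hz
        have hBan : AnalyticOnNhd ℂ (Bfun k c C G Φ μ') U :=
          an_Bfun (by omega) hG hΦ hc hC
        have hev : (Bfun k c C G Φ μ') =ᶠ[nhds z₀] 0 := by
          filter_upwards [hUo.mem_nhds hz₀U,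
            ((hMdet z₀ hz₀U).continuousAt.eventually_ne hz₀d)] with x hxU hxd
          exact hvec x hxU hxd ⟨μ', hμ'⟩
        exact hBan.eqOn_zero_of_preconnected_of_eventuallyEq_zero hUc.isPreconnected hz₀U hev hz
    intro μ hμ z hz
    have h := hB0 μ (by omega) z hz
    unfold Bfun at h
    linear_combination h
  · intro hid j z hz
    rw [key j z hz]
    apply Finset.sum_eq_zero
    intro μ hμ
    have hμ' : μ ≤ k - 1 := by have := Finset.mem_range.mp hμ; omega
    have h := hid μ hμ' z hz
    have hB : Bfun k c C G Φ μ z = 0 := by unfold Bfun; linear_combination h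
    rw [hB, zero_mul]
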